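/- Let A be a finite-dimensional commutative associative complex algebra equipped with a nondegenerate symmetric ℂ-bilinear form B satisfying B(ab,c) = B(a,bc) for all a,b,c ∈ A, and let aff(A) be the underlying real Lie algebra of A ⊕ A with bracket [(a,b),(c,d)] = (0, ad − cb). Define J(a,b) = (−ia, ib), g((a,b),(c,d)) = Re(B(a,d) + B(b,c)), and ∇_{(a,b)}(c,d) = (−ac, ad). Then: g is a nondegenerate symmetric real bilinear form on aff(A) for which the subspaces A ⊕ 0 and 0 ⊕ A are null (so g has neutral signature); ∇ is torsion-free (∇_x y − ∇_y x = [x,y]) and is the Levi-Civita connection of g; J is a complex structure compatible with g (g(Jx,Jy) = g(x,y)) and is parallel (∇_x(Jy) = J(∇_x y) for all x,y); and the curvature R(x,y) = ∇_x∇_y − ∇_y∇_x − ∇_{[x,y]} vanishes identically, so g is a flat (in particular Ricci-flat) pseudo-Kähler metric on aff(A). -/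

import Mathlib

set_option linter.unusedSectionVars false
set_option linter.unnecessarySeqFocus false

/-- The underlying set of the affine Lie algebra aff(A) = A ⊕ A. -/
def AffLie (A : Type*) : Type _ := A × A

namespace AffLie

variable {A : Type*} [CommRing A] [Algebra ℝ A]

instance : AddCommGroup (AffLie A) := inferInstanceAs (AddCommGroup (A × A))
instance : Module ℝ (AffLie A) := inferInstanceAs (Module ℝ (A × A))

/-- Build an element of aff(A) from its two components. -/
def mk' (a b : A) : AffLie A := ((a, b) : A × A)

/-- First component. -/
def fst (p : AffLie A) : A := Prod.fst p

/-- Second component. -/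
def snd (p : AffLie A) : A := Prod.snd p

@[simp] lemma fst_mk (a b : A) : (mk' a b : AffLie A).fst = a := rfl
@[simp] lemma snd_mk (a b : A) : (mk' a b : AffLie A).snd = b := rfl
@[simp] lemma fst_add (p q : AffLie A) : (p + q).fst = p.fst + q.fst := rfl
@[simp] lemma snd_add (p q : AffLie A) : (p + q).snd = p.snd + q.snd := rfl
@[simp] lemma fst_smul (t : ℝ) (p : AffLie A) : (t • p).fst = t • p.fst := rfl
@[simp] lemma snd_smul (t : ℝ) (p : AffLie A) : (t • p).snd = t • p.snd := rfl

@[simp] lemma fst_zero : (0 : AffLie A).fst = 0 := rfl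
@[simp] lemma snd_zero : (0 : AffLie A).snd = 0 := rfl

lemma ext' {p q : AffLie A} (h1 : p.fst = q.fst) (h2 : p.snd = q.snd) : p = q :=
  Prod.ext h1 h2

/-- The Lie ring structure on aff(A): [(a,b),(c,d)] = (0, a d - c b). -/
instance : LieRing (AffLie A) where
  bracket p q := mk' 0 (p.fst * q.snd - q.fst * p.snd)
  add_lie p q r := by
    apply ext' <;> simp <;> ring
  lie_add p q r := by
    apply ext' <;> simp <;> ring
  lie_self p := by
    apply ext' <;> simp
  leibniz_lie p q r := by
    apply ext' <;> simp <;> ring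

@[simp] lemma fst_bracket (p q : AffLie A) : (⁅p, q⁆ : AffLie A).fst = 0 := rfl
@[simp] lemma snd_bracket (p q : AffLie A) :
    (⁅p, q⁆ : AffLie A).snd = p.fst * q.snd - q.fst * p.snd := rfl

instance : LieAlgebra ℝ (AffLie A) where
  lie_smul t p q := by
    apply ext' <;> simp [mul_smul_comm, smul_mul_assoc, smul_sub]

end AffLie

section ComplexAff

variable {A : Type*} [CommRing A] [Algebra ℂ A] [Algebra ℝ A] [IsScalarTower ℝ ℂ A]

/-- The flat connection ∇_{(a,b)}(c,d) = (-ac, ad) on aff(A). -/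
def affConn (p q : AffLie A) : AffLie A :=
  AffLie.mk' (-(p.fst * q.fst)) (p.fst * q.snd)

/-- The complex structure J(a,b) = (-ia, ib) on aff(A), A a complex algebra. -/
def affJ (p : AffLie A) : AffLie A :=
  AffLie.mk' (-(Complex.I • p.fst)) (Complex.I • p.snd)

/-- The neutral metric g((a,b),(c,d)) = Re (B(a,d) + B(b,c)) on aff(A). -/
noncomputable def affMetric (B : A →ₗ[ℂ] A →ₗ[ℂ] ℂ) (p q : AffLie A) : ℝ :=
  (B p.fst q.snd + B p.snd q.fst).re

end ComplexAff

section AuxProof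

variable {A : Type*} [CommRing A] [Algebra ℂ A] [Algebra ℝ A] [IsScalarTower ℝ ℂ A]

@[simp] lemma AffLie.fst_sub (p q : AffLie A) : (p - q).fst = p.fst - q.fst := rfl
@[simp] lemma AffLie.snd_sub (p q : AffLie A) : (p - q).snd = p.snd - q.snd := rfl
@[simp] lemma AffLie.fst_neg (p : AffLie A) : (-p).fst = -p.fst := rfl
@[simp] lemma AffLie.snd_neg (p : AffLie A) : (-p).snd = -p.snd := rfl

@[simp] lemma affConn_fst (p q : AffLie A) : (affConn p q).fst = -(p.fst * q.fst) := rfl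
@[simp] lemma affConn_snd (p q : AffLie A) : (affConn p q).snd = p.fst * q.snd := rfl
@[simp] lemma affJ_fst (p : AffLie A) : (affJ p).fst = -(Complex.I • p.fst) := rfl
@[simp] lemma affJ_snd (p : AffLie A) : (affJ p).snd = Complex.I • p.snd := rfl

lemma affMetric_def (B : A →ₗ[ℂ] A →ₗ[ℂ] ℂ) (p q : AffLie A) :
    affMetric B p q = (B p.fst q.snd + B p.snd q.fst).re := rfl

/-- affJ as an ℝ-linear endomorphism. -/
def affJEnd : Module.End ℝ (AffLie A) where
  toFun := affJ
  map_add' p q := by apply AffLie.ext' <;> simp [smul_add] <;> abel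
  map_smul' t p := by
    apply AffLie.ext' <;> simp [smul_comm t Complex.I] <;>
      rw [← IsScalarTower.algebraMap_smul ℂ t p.fst, ← IsScalarTower.algebraMap_smul ℂ t, smul_neg, smul_smul, smul_smul, mul_comm]

@[simp] lemma affJEnd_apply (p : AffLie A) : (affJEnd : Module.End ℝ (AffLie A)) p = affJ p := rfl

end AuxProof

/-- For a finite-dimensional commutative associative complex algebra A with a
nondegenerate symmetric associative ℂ-bilinear form B, the metric
g((a,b),(c,d)) = Re(B(a,d) + B(b,c)) on the real Lie algebra aff(A) is a nondegenerate
symmetric bilinear form which is null on A ⊕ 0 and 0 ⊕ A (hence of neutral signature),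
∇_{(a,b)}(c,d) = (-ac, ad) is torsion-free and is the Levi-Civita connection of g (Koszul
formula), J(a,b) = (-ia, ib) is a complex structure compatible with g and parallel for ∇,
and the curvature of ∇ vanishes: g is a flat, in particular Ricci-flat, pseudo-Kähler
metric on aff(A). -/
theorem affLie_complex_ricci_flat_kahler
    {A : Type*} [CommRing A] [Algebra ℂ A] [Algebra ℝ A] [IsScalarTower ℝ ℂ A]
    [Module.Finite ℂ A]
    (B : A →ₗ[ℂ] A →ₗ[ℂ] ℂ)
    (hBsymm : ∀ a b : A, B a b = B b a)
    (hBnd : ∀ a : A, (∀ b : A, B a b = 0) → a = 0)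
    (hBassoc : ∀ a b c : A, B (a * b) c = B a (b * c)) :
    -- g is a symmetric bilinear form
    (∃ gl : AffLie A →ₗ[ℝ] AffLie A →ₗ[ℝ] ℝ, ∀ p q : AffLie A, gl p q = affMetric B p q) ∧
    (∀ p q : AffLie A, affMetric B p q = affMetric B q p) ∧
    -- g is nondegenerate
    (∀ p : AffLie A, (∀ q : AffLie A, affMetric B p q = 0) → p = 0) ∧
    -- A ⊕ 0 and 0 ⊕ A are null subspaces for g
    (∀ a b : A, affMetric B (AffLie.mk' a 0) (AffLie.mk' b 0) = 0) ∧
    (∀ a b : A, affMetric B (AffLie.mk' 0 a) (AffLie.mk' 0 b) = 0) ∧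
    -- ∇ is torsion-free
    (∀ p q : AffLie A, affConn p q - affConn q p = ⁅p, q⁆) ∧
    -- ∇ is the Levi-Civita connection of g (Koszul formula)
    (∀ p q r : AffLie A,
      2 * affMetric B (affConn p q) r =
        affMetric B ⁅p, q⁆ r - affMetric B ⁅q, r⁆ p + affMetric B ⁅r, p⁆ q) ∧
    -- J is a complex structure, compatible with g and parallel for ∇
    (∃ J : Module.End ℝ (AffLie A),
      (∀ p : AffLie A, J p = affJ p) ∧
      (∀ p : AffLie A, J (J p) = -p) ∧
      (∀ p q : AffLie A, ⁅J p, J q⁆ - ⁅p, q⁆ - J ⁅J p, q⁆ - J ⁅p, J q⁆ = 0) ∧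
      (∀ p q : AffLie A, affMetric B (J p) (J q) = affMetric B p q) ∧
      (∀ p q : AffLie A, affConn p (J q) = J (affConn p q))) ∧
    -- the curvature of ∇ vanishes identically: g is flat
    (∀ p q r : AffLie A,
      affConn p (affConn q r) - affConn q (affConn p r) - affConn ⁅p, q⁆ r = 0) ∧
    -- in particular g is Ricci flat
    (∀ p q : AffLie A, ∀ T : Module.End ℝ (AffLie A),
      (∀ r : AffLie A,
        T r = affConn p (affConn r q) - affConn r (affConn p q) - affConn ⁅p, r⁆ q) →
      LinearMap.trace ℝ (AffLie A) T = 0) := by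
  have hBsl : ∀ (t : ℝ) (a b : A), B (t • a) b = t • B a b := by
    intro t a b
    rw [← IsScalarTower.algebraMap_smul ℂ t a, map_smul, LinearMap.smul_apply, algebraMap_smul]
  have hBsr : ∀ (t : ℝ) (a b : A), B a (t • b) = t • B a b := by
    intro t a b
    rw [← IsScalarTower.algebraMap_smul ℂ t b, map_smul, algebraMap_smul]
  have h3 : ∀ x y z : A, B (x * y) z = B (y * z) x := by
    intro x y z; rw [hBassoc, hBsymm]
  have hflat : ∀ p q r : AffLie A,
      affConn p (affConn q r) - affConn q (affConn p r) - affConn ⁅p, q⁆ r = 0 := by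
    intro p q r
    apply AffLie.ext' <;> simp <;> ring
  refine ⟨?_, ?_, ?_, ?_, ?_, ?_, ?_, ?_, hflat, ?_⟩
  · -- bilinearity
    refine ⟨LinearMap.mk₂ ℝ (affMetric B) ?_ ?_ ?_ ?_, fun p q => rfl⟩
    · intro p p' q
      simp [affMetric_def, Complex.add_re]; ring
    · intro t p q
      simp [affMetric_def, hBsl, Complex.add_re, Complex.smul_re]; ring
    · intro p q q'
      simp [affMetric_def, Complex.add_re]; ring
    · intro t p q
      simp [affMetric_def, hBsr, Complex.add_re, Complex.smul_re]; ring
  · -- symmetry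
    intro p q
    simp [affMetric_def, hBsymm p.fst q.snd, hBsymm p.snd q.fst]; ring
  · -- nondegeneracy
    intro p hp
    have h1 : p.fst = 0 := by
      apply hBnd
      intro b
      have hre := hp (AffLie.mk' 0 b)
      have him := hp (AffLie.mk' 0 (Complex.I • b))
      simp [affMetric_def, map_smul, smul_eq_mul, Complex.mul_re] at hre him
      exact Complex.ext (by simpa using hre) (by simpa using him)
    have h2 : p.snd = 0 := by
      apply hBnd
      intro b
      have hre := hp (AffLie.mk' b 0)
      have him := hp (AffLie.mk' (Complex.I • b) 0)
      simp [affMetric_def, map_smul, smul_eq_mul, Complex.mul_re] at hre him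
      exact Complex.ext (by simpa using hre) (by simpa using him)
    exact AffLie.ext' h1 h2
  · intro a b; simp [affMetric_def]
  · intro a b; simp [affMetric_def]
  · -- torsion-free
    intro p q
    apply AffLie.ext' <;> simp <;> ring
  · -- Koszul formula
    intro p q r
    have e1 : B (q.fst * p.snd) r.fst = B (r.fst * p.snd) q.fst := by
      rw [h3, mul_comm p.snd r.fst]
    have e2 : B (r.fst * q.snd) p.fst = B (p.fst * q.snd) r.fst := by
      rw [h3, mul_comm q.snd p.fst]
    have e3 : B (q.fst * r.snd) p.fst = B (p.fst * r.snd) q.fst := by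
      rw [h3, mul_comm r.snd p.fst]
    have e4 : B (p.fst * q.fst) r.snd = B (p.fst * r.snd) q.fst := by
      rw [h3, e3]
    simp only [affMetric_def, affConn_fst, affConn_snd, AffLie.fst_bracket,
      AffLie.snd_bracket, map_zero, LinearMap.zero_apply, zero_add, add_zero,
      map_sub, map_neg, LinearMap.sub_apply, LinearMap.neg_apply,
      Complex.sub_re, Complex.neg_re, Complex.add_re]
    rw [e1, e2, e3, e4]; ring
  · -- J
    refine ⟨affJEnd, fun p => rfl, ?_, ?_, ?_, ?_⟩
    · intro p
      apply AffLie.ext' <;>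
        simp [smul_smul, Complex.I_mul_I, neg_one_smul]
    · intro p q
      apply AffLie.ext' <;>
        simp [smul_mul_assoc, mul_smul_comm, smul_smul, Complex.I_mul_I,
          neg_one_smul, smul_sub, smul_add] <;> abel
    · intro p q
      simp only [affMetric_def, affJEnd_apply, affJ_fst, affJ_snd, map_smul, map_neg,
        LinearMap.neg_apply, LinearMap.smul_apply, smul_eq_mul]
      ring_nf
      simp [Complex.I_sq]
    · intro p q
      apply AffLie.ext' <;> simp [mul_smul_comm]
  · -- Ricci flat
    intro p q T hT
    have hT0 : T = 0 := by
      ext r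
      rw [hT r, hflat p r q, LinearMap.zero_apply]
    simp [hT0]
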